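/- For all n ∈ ℤ⁺ and all real r with 0 < r ≤ 1, (r² + 10r + 1)·(Σ_{k=1}^{n} k² r^k)² ≥ (r+1)·(Σ_{k=1}^{n} k⁴ r^k)·(Σ_{k=1}^{n} r^k). -/

import Mathlib

open Finset

/-- coefficient polynomial -/
noncomputable def aa (x t : ℝ) : ℝ :=
  2*x*t^2 - 2*x*t^4 + 2*x^2 - 6*x^2*t + 12*x^2*t^2 - 4*x^2*t^3 + 4*x^3*t^2 - 1*x^4 + 2*x^4*t

noncomputable def ww2 (x r : ℝ) : ℝ :=
  1 + r + 2*x - 2*x*r + x^2 - 2*x^2*r + x^2*r^2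

noncomputable def ww4 (x r : ℝ) : ℝ :=
  1 + 11*r + 11*r^2 + r^3 + 4*x + 12*x*r - 12*x*r^2 - 4*x*r^3 + 6*x^2 - 6*x^2*r - 6*x^2*r^2
  + 6*x^2*r^3 + 4*x^3 - 12*x^3*r + 12*x^3*r^2 - 4*x^3*r^3 + x^4 - 4*x^4*r + 6*x^4*r^2
  - 4*x^4*r^3 + x^4*r^4

noncomputable def cc (x r : ℝ) : ℝ :=
  -24*x*r^2 - 24*x*r^3 + 4*x^2*r - 14*x^2*r^2 - 6*x^2*r^3 + 14*x^2*r^4 + 2*x^2*r^5 + 4*x^3*r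
  - 4*x^3*r^2 - 4*x^3*r^3 + 4*x^3*r^4 + x^4*r - 2*x^4*r^2 + 2*x^4*r^4 - 1*x^4*r^5

noncomputable def dd (x m r : ℝ) : ℝ :=
  -24*x*r - 24*x*r^2 - 4*x*m - 36*x*m*r + 36*x*m*r^2 + 4*x*m*r^3 - 10*x*m^2 + 4*x*m^2*r
  + 24*x*m^2*r^2 - 20*x*m^2*r^3 + 2*x*m^2*r^4 - 8*x*m^3 + 24*x*m^3*r - 24*x*m^3*r^2
  + 8*x*m^3*r^3 - 2*x*m^4 + 8*x*m^4*r - 12*x*m^4*r^2 + 8*x*m^4*r^3 - 2*x*m^4*r^4 + 4*x^2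
  - 14*x^2*r - 6*x^2*r^2 + 14*x^2*r^3 + 2*x^2*r^4 + 6*x^2*m - 36*x^2*m*r + 48*x^2*m*r^2
  - 12*x^2*m*r^3 - 6*x^2*m*r^4 - 12*x^2*m^2*r + 36*x^2*m^2*r^2 - 36*x^2*m^2*r^3
  + 12*x^2*m^2*r^4 - 4*x^2*m^3 + 16*x^2*m^3*r - 24*x^2*m^3*r^2 + 16*x^2*m^3*r^3
  - 4*x^2*m^3*r^4 + 4*x^3 - 4*x^3*r - 4*x^3*r^2 + 4*x^3*r^3 + 8*x^3*m - 24*x^3*m*r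
  + 24*x^3*m*r^2 - 8*x^3*m*r^3 + 4*x^3*m^2 - 16*x^3*m^2*r + 24*x^3*m^2*r^2 - 16*x^3*m^2*r^3
  + 4*x^3*m^2*r^4 + x^4 - 2*x^4*r + 2*x^4*r^3 - 1*x^4*r^4 + 2*x^4*m - 8*x^4*m*r
  + 12*x^4*m*r^2 - 8*x^4*m*r^3 + 2*x^4*m*r^4

lemma sum0 (N : ℕ) (r : ℝ) :
    (1 - r) * ∑ k ∈ Icc 1 N, r ^ k = r - r ^ (N + 1) := by
  induction N with
  | zero => simp
  | succ N ih =>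
      rw [Finset.sum_Icc_succ_top (by omega : 1 ≤ N + 1)]
      rw [mul_add, ih]
      ring

lemma sum2 (N : ℕ) (r : ℝ) :
    (1 - r) ^ 3 * ∑ k ∈ Icc 1 N, (k : ℝ) ^ 2 * r ^ k
      = r + r ^ 2 - r ^ (N + 1) * ww2 (N : ℝ) r := by
  induction N with
  | zero => simp [ww2]; ring
  | succ N ih =>
      rw [Finset.sum_Icc_succ_top (by omega : 1 ≤ N + 1)]
      rw [mul_add, ih]
      simp only [ww2]
      push_cast
      ring

lemma sum4 (N : ℕ) (r : ℝ) :
    (1 - r) ^ 5 * ∑ k ∈ Icc 1 N, (k : ℝ) ^ 4 * r ^ k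
      = r + 11*r^2 + 11*r^3 + r^4 - r ^ (N + 1) * ww4 (N : ℝ) r := by
  induction N with
  | zero => simp [ww4]; ring
  | succ N ih =>
      rw [Finset.sum_Icc_succ_top (by omega : 1 ≤ N + 1)]
      rw [mul_add, ih]
      simp only [ww4]
      push_cast
      ring

lemma sumA (x : ℝ) (M : ℕ) (r : ℝ) :
    (1 - r) ^ 5 * ∑ t ∈ Icc 1 M, aa x (t : ℝ) * r ^ t
      = cc x r - r ^ (M + 1) * dd x (M : ℝ) r := by
  induction M with
  | zero => simp [cc, dd]; ring
  | succ M ih =>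
      rw [Finset.sum_Icc_succ_top (by omega : 1 ≤ M + 1)]
      rw [mul_add, ih]
      simp only [aa, cc, dd]
      push_cast
      ring

lemma key (n : ℕ) (r : ℝ) :
    (1 - r) ^ 6 * ((r ^ 2 + 10 * r + 1) * (∑ k ∈ Icc 1 n, (k : ℝ) ^ 2 * r ^ k) ^ 2
        - (r + 1) * (∑ k ∈ Icc 1 n, (k : ℝ) ^ 4 * r ^ k) * (∑ k ∈ Icc 1 n, r ^ k))
      = (1 - r) ^ 6 * (r ^ (n + 1) * ∑ t ∈ Icc 1 (n + 1), aa (n : ℝ) (t : ℝ) * r ^ t) := by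
  have h0 := sum0 n r
  have h2 := sum2 n r
  have h4 := sum4 n r
  have hA := sumA (n : ℝ) (n + 1) r
  push_cast at hA
  set A := ∑ k ∈ Icc 1 n, (k : ℝ) ^ 2 * r ^ k with hAdef
  set B := ∑ k ∈ Icc 1 n, (k : ℝ) ^ 4 * r ^ k with hBdef
  set C := ∑ k ∈ Icc 1 n, r ^ k with hCdef
  set W := ∑ t ∈ Icc 1 (n + 1), aa (n : ℝ) (t : ℝ) * r ^ t with hWdef
  simp only [ww2, ww4, cc, dd] at h2 h4 hA
  set x := (n : ℝ) with hxdef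
  set Y := r ^ (n + 1) with hYdef
  linear_combination
    ((r ^ 2 + 10 * r + 1) * ((1 - r) ^ 3 * A
        + (r + r ^ 2 - Y * (1 + r + 2*x - 2*x*r + x^2 - 2*x^2*r + x^2*r^2)))) * h2
    - ((r + 1) * (1 - r) * C) * h4
    - ((r + 1) * (r + 11*r^2 + 11*r^3 + r^4 - Y * (1 + 11*r + 11*r^2 + r^3 + 4*x + 12*x*r
        - 12*x*r^2 - 4*x*r^3 + 6*x^2 - 6*x^2*r - 6*x^2*r^2 + 6*x^2*r^3 + 4*x^3 - 12*x^3*r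
        + 12*x^3*r^2 - 4*x^3*r^3 + x^4 - 4*x^4*r + 6*x^4*r^2 - 4*x^4*r^3 + x^4*r^4))) * h0
    - ((1 - r) * Y) * hA

lemma aa_nonneg (x t : ℝ) (ht1 : 1 ≤ t) (ht2 : t ≤ x + 1) : 0 ≤ aa x t := by
  have hs : (0:ℝ) ≤ t - 1 := by linarith
  have he : (0:ℝ) ≤ x + 1 - t := by linarith
  set s := t - 1 with hsdef
  set e := x + 1 - t with hedef
  have hkey : aa x t = 4*e^2 + 4*e^3 + e^4 + 4*s*e + 18*s*e^2 + 12*s*e^3 + 2*s*e^4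
      + 14*s^2*e + 30*s^2*e^2 + 12*s^2*e^3 + 20*s^3*e + 20*s^3*e^2 + s^4 + 10*s^4*e := by
    simp only [aa, hsdef, hedef]; ring
  rw [hkey]
  have h1 := mul_nonneg hs he
  have h2 := mul_nonneg (mul_nonneg hs hs) he
  have h3 := mul_nonneg hs (mul_nonneg he he)
  have h4 := mul_nonneg (mul_nonneg hs hs) (mul_nonneg hs he)
  have h5 := mul_nonneg (mul_nonneg hs he) (mul_nonneg hs he)
  have h6 := mul_nonneg hs (mul_nonneg he (mul_nonneg he he))
  have h7 := mul_nonneg (mul_nonneg (mul_nonneg hs hs) (mul_nonneg hs hs)) he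
  have h8 := mul_nonneg (mul_nonneg hs (mul_nonneg hs hs)) (mul_nonneg he he)
  have h9 := mul_nonneg (mul_nonneg (mul_nonneg hs hs) (mul_nonneg he he)) he
  have h10 := mul_nonneg hs (mul_nonneg (mul_nonneg he he) (mul_nonneg he he))
  have h11 := pow_nonneg hs 4
  have h12 := pow_nonneg he 4
  have h13 := mul_nonneg (mul_nonneg hs hs) (mul_nonneg (mul_nonneg he he) he)
  nlinarith [h1, h2, h3, h4, h5, h6, h7, h8, h9, h10, h11, h12, h13,
    mul_nonneg he he, mul_nonneg hs hs, mul_nonneg (mul_nonneg he he) he]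

lemma sumsq (N : ℕ) : (6:ℝ) * ∑ k ∈ Icc 1 N, (k : ℝ) ^ 2 = N * (N + 1) * (2 * N + 1) := by
  induction N with
  | zero => simp
  | succ N ih =>
      rw [Finset.sum_Icc_succ_top (by omega : 1 ≤ N + 1)]
      rw [mul_add, ih]
      push_cast
      ring

lemma sumquart (N : ℕ) : (30:ℝ) * ∑ k ∈ Icc 1 N, (k : ℝ) ^ 4
    = N * (N + 1) * (2 * N + 1) * (3 * N ^ 2 + 3 * N - 1) := by
  induction N with
  | zero => simp
  | succ N ih =>
      rw [Finset.sum_Icc_succ_top (by omega : 1 ≤ N + 1)]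
      rw [mul_add, ih]
      push_cast
      ring

theorem stmt8 (n : ℕ) (hn : 1 ≤ n) (r : ℝ) (hr0 : 0 < r) (hr1 : r ≤ 1) :
    (r ^ 2 + 10 * r + 1) * (∑ k ∈ Finset.Icc 1 n, (k : ℝ) ^ 2 * r ^ k) ^ 2
      ≥ (r + 1) * (∑ k ∈ Finset.Icc 1 n, (k : ℝ) ^ 4 * r ^ k)
          * (∑ k ∈ Finset.Icc 1 n, r ^ k) := by
  rcases eq_or_lt_of_le hr1 with heq | hlt
  · -- r = 1
    subst heq
    simp only [one_pow, mul_one]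
    have h2 := sumsq n
    have h4 := sumquart n
    have h0 : (∑ k ∈ Finset.Icc 1 n, (1:ℝ)) = n := by
      rw [Finset.sum_const, Nat.card_Icc]
      simp
    rw [h0]
    have hn' : (1:ℝ) ≤ n := by exact_mod_cast hn
    nlinarith [sq_nonneg ((n:ℝ) * (n + 1) * (2 * n + 1)), mul_pos (mul_pos (by linarith : (0:ℝ) < n) (by linarith : (0:ℝ) < (n:ℝ)+1)) (by linarith : (0:ℝ) < 2*(n:ℝ)+1), sq_nonneg ((n:ℝ)), h2, h4]
  · -- r < 1
    have hr1' : (0:ℝ) < 1 - r := by linarith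
    have h6 : (0:ℝ) < (1 - r) ^ 6 := by positivity
    have hk := key n r
    have hmain : (r ^ 2 + 10 * r + 1) * (∑ k ∈ Finset.Icc 1 n, (k : ℝ) ^ 2 * r ^ k) ^ 2
        - (r + 1) * (∑ k ∈ Finset.Icc 1 n, (k : ℝ) ^ 4 * r ^ k) * (∑ k ∈ Finset.Icc 1 n, r ^ k)
        = r ^ (n + 1) * ∑ t ∈ Finset.Icc 1 (n + 1), aa (n : ℝ) (t : ℝ) * r ^ t :=
      mul_left_cancel₀ (ne_of_gt h6) hk
    have hW : 0 ≤ ∑ t ∈ Finset.Icc 1 (n + 1), aa (n : ℝ) (t : ℝ) * r ^ t := by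
      apply Finset.sum_nonneg
      intro t ht
      rw [Finset.mem_Icc] at ht
      have ht1 : (1:ℝ) ≤ t := by exact_mod_cast ht.1
      have ht2 : (t:ℝ) ≤ (n:ℝ) + 1 := by exact_mod_cast ht.2
      exact mul_nonneg (aa_nonneg _ _ ht1 ht2) (pow_nonneg hr0.le t)
    have hX : 0 ≤ r ^ (n + 1) := pow_nonneg hr0.le _
    nlinarith [mul_nonneg hX hW]
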